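/- arXiv:1705.04572 — 4 statements merged into one kernel-verified Lean document; each statement's English description precedes it below -/
import Mathlib

section
/- Let (A₁,Q₁) and (A₂,Q₂) be finite quadratic modules and let (A,Q) be their orthogonal direct sum, i.e. A = A₁ × A₂ and Q(x₁,x₂) = Q₁(x₁) + Q₂(x₂) (which is again a finite quadratic module). Then the linear isomorphism Φ : ℂ[A] → ℂ[A₁] ⊗ ℂ[A₂] determined by Φ(𝔢_{(x₁,x₂)}) = 𝔢_{x₁} ⊗ 𝔢_{x₂} intertwines the Weil representation operators: Φ ∘ T_A = (T_{A₁} ⊗ T_{A₂}) ∘ Φ and Φ ∘ S_A = (S_{A₁} ⊗ S_{A₂}) ∘ Φ, where the subscripts indicate the operators attached to the respective finite quadratic module. -/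
open Finset

noncomputable def qe (q : AddCircle (1 : ℚ)) : ℂ :=
  Complex.exp (2 * (Real.pi : ℂ) * Complex.I * ((q.out : ℚ) : ℂ))

/-- `(A, Q)` is a finite quadratic module: `Q` is a nondegenerate quadratic form
with values in `ℚ/ℤ`. -/
def IsFQM {A : Type*} [AddCommGroup A] (Q : A → AddCircle (1 : ℚ)) : Prop :=
  (∀ (n : ℤ) (x : A), Q (n • x) = n ^ 2 • Q x) ∧
  (∀ x x' y : A,
      Q (x + x' + y) - Q (x + x') - Q y =
        (Q (x + y) - Q x - Q y) + (Q (x' + y) - Q x' - Q y)) ∧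
  (∀ x : A, (∀ y : A, Q (x + y) - Q x - Q y = 0) → x = 0)

/-- The standard basis vector `𝔢_x` of `ℂ[A]`. -/
noncomputable def indic {A : Type*} [DecidableEq A] (x : A) : A → ℂ :=
  fun y => if y = x then 1 else 0

/-- The Weil representation operator `T`. -/
noncomputable def weilT {A : Type*} [AddCommGroup A] [Fintype A]
    (Q : A → AddCircle (1 : ℚ)) : (A → ℂ) →ₗ[ℂ] (A → ℂ) where
  toFun v := fun x => qe (Q x) * v x
  map_add' u v := by funext x; simp [mul_add]
  map_smul' c v := by funext x; simp [smul_eq_mul]; ring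

/-- The Weil representation operator `S`. -/
noncomputable def weilS {A : Type*} [AddCommGroup A] [Fintype A]
    (Q : A → AddCircle (1 : ℚ)) : (A → ℂ) →ₗ[ℂ] (A → ℂ) where
  toFun v := fun y =>
    ((Fintype.card A : ℂ)⁻¹ * ∑ z, qe (-(Q z))) *
      ∑ x, qe (-(Q (x + y) - Q x - Q y)) * v x
  map_add' u v := by
    funext y
    simp only [Pi.add_apply, mul_add, Finset.sum_add_distrib]
  map_smul' c v := by
    funext y
    simp only [Pi.smul_apply, smul_eq_mul, RingHom.id_apply, Finset.mul_sum]
    exact Finset.sum_congr rfl fun x _ => by ring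

/-- The space of invariants of the Weil representation. -/
noncomputable def weilInv {A : Type*} [AddCommGroup A] [Fintype A]
    (Q : A → AddCircle (1 : ℚ)) : Submodule ℂ (A → ℂ) where
  carrier := {v | weilS Q v = v ∧ weilT Q v = v}
  add_mem' := by
    rintro u v ⟨hu1, hu2⟩ ⟨hv1, hv2⟩
    exact ⟨by rw [map_add, hu1, hv1], by rw [map_add, hu2, hv2]⟩
  zero_mem' := ⟨map_zero _, map_zero _⟩
  smul_mem' := by
    rintro c v ⟨h1, h2⟩
    exact ⟨by rw [map_smul, h1], by rw [map_smul, h2]⟩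

/-- `N` is the level of `(A,Q)`. -/
def IsLvl {A : Type*} [AddCommGroup A] (Q : A → AddCircle (1 : ℚ)) (N : ℕ) : Prop :=
  0 < N ∧ (∀ x, N • Q x = 0) ∧ ∀ M : ℕ, 0 < M → (∀ x, M • Q x = 0) → N ≤ M

lemma qe_add (a b : AddCircle (1 : ℚ)) : qe (a + b) = qe a * qe b := by
  obtain ⟨k, hk⟩ : ∃ k : ℤ, a.out + b.out - (a + b).out = (k : ℚ) := by
    have h : ((a.out + b.out : ℚ) : AddCircle (1 : ℚ)) = ((a + b).out : AddCircle (1 : ℚ)) := by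
      simp [Quotient.out_eq']
    rw [QuotientAddGroup.eq_iff_sub_mem] at h
    obtain ⟨k, hk⟩ := h
    exact ⟨k, by simpa using hk.symm⟩
  have hC : ((a.out : ℚ) : ℂ) + ((b.out : ℚ) : ℂ) - (((a+b).out : ℚ) : ℂ) = (k : ℂ) := by
    have := congrArg (fun q : ℚ => (q : ℂ)) hk
    push_cast at this
    linear_combination this
  unfold qe
  rw [← Complex.exp_add]
  have h2 : 2 * (Real.pi : ℂ) * Complex.I * ((a.out : ℚ) : ℂ)
      + 2 * (Real.pi : ℂ) * Complex.I * ((b.out : ℚ) : ℂ)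
      = 2 * (Real.pi : ℂ) * Complex.I * (((a+b).out : ℚ) : ℂ)
        + k * (2 * (Real.pi : ℂ) * Complex.I) := by
    linear_combination (2 * (Real.pi : ℂ) * Complex.I) * hC
  rw [h2, Complex.exp_add, Complex.exp_int_mul_two_pi_mul_I, mul_one]

lemma expand_indic {A : Type*} [Fintype A] [DecidableEq A] (f : A → ℂ) :
    f = ∑ p, f p • indic p := by
  funext y
  simp [indic, Finset.sum_apply]

lemma weilT_indic {A : Type*} [AddCommGroup A] [Fintype A] [DecidableEq A]
    (Q : A → AddCircle (1 : ℚ)) (x : A) :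
    weilT Q (indic x) = qe (Q x) • indic x := by
  funext y
  by_cases h : y = x <;> simp [weilT, indic, h]

lemma weilS_indic {A : Type*} [AddCommGroup A] [Fintype A] [DecidableEq A]
    (Q : A → AddCircle (1 : ℚ)) (x : A) :
    weilS Q (indic x) = fun y =>
      ((Fintype.card A : ℂ)⁻¹ * ∑ z, qe (-(Q z))) *
        qe (-(Q (x + y) - Q x - Q y)) := by
  funext y
  simp [weilS, indic, mul_ite, mul_one, mul_zero]

open TensorProduct in
/-- The isomorphism `ℂ[A₁ × A₂] ≅ ℂ[A₁] ⊗ ℂ[A₂]` sending `𝔢_{(x₁,x₂)}` to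
`𝔢_{x₁} ⊗ 𝔢_{x₂}` intertwines the Weil representation operators of the orthogonal
direct sum `(A₁ × A₂, Q₁ ⊕ Q₂)` with the tensor products of those of the factors. -/
theorem stmt0 {A₁ A₂ : Type*} [AddCommGroup A₁] [Fintype A₁] [DecidableEq A₁]
    [AddCommGroup A₂] [Fintype A₂] [DecidableEq A₂]
    (Q₁ : A₁ → AddCircle (1 : ℚ)) (Q₂ : A₂ → AddCircle (1 : ℚ))
    (hQ₁ : IsFQM Q₁) (hQ₂ : IsFQM Q₂)
    (Q : A₁ × A₂ → AddCircle (1 : ℚ))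
    (hQ : ∀ x : A₁ × A₂, Q x = Q₁ x.1 + Q₂ x.2)
    (Φ : (A₁ × A₂ → ℂ) →ₗ[ℂ] TensorProduct ℂ (A₁ → ℂ) (A₂ → ℂ))
    (hΦ : ∀ (x₁ : A₁) (x₂ : A₂), Φ (indic (x₁, x₂)) = indic x₁ ⊗ₜ[ℂ] indic x₂) :
    Φ ∘ₗ weilT Q = TensorProduct.map (weilT Q₁) (weilT Q₂) ∘ₗ Φ ∧
    Φ ∘ₗ weilS Q = TensorProduct.map (weilS Q₁) (weilS Q₂) ∘ₗ Φ := by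
  -- reduce equality of linear maps to equality on the indicator basis
  have basis_ext : ∀ (F G : (A₁ × A₂ → ℂ) →ₗ[ℂ] TensorProduct ℂ (A₁ → ℂ) (A₂ → ℂ)),
      (∀ x₁ x₂, F (indic (x₁, x₂)) = G (indic (x₁, x₂))) → F = G := by
    intro F G h
    apply LinearMap.ext
    intro f
    rw [expand_indic f, map_sum, map_sum]
    refine Finset.sum_congr rfl fun p _ => ?_
    rw [map_smul, map_smul, ← Prod.mk.eta (p := p), h p.1 p.2]
  -- basic multiplicativity facts
  have hqeQ : ∀ (x₁ : A₁) (x₂ : A₂), qe (Q (x₁, x₂)) = qe (Q₁ x₁) * qe (Q₂ x₂) := by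
    intro x₁ x₂; rw [hQ]; exact qe_add _ _
  have hqeNQ : ∀ z : A₁ × A₂, qe (-(Q z)) = qe (-(Q₁ z.1)) * qe (-(Q₂ z.2)) := by
    intro z; rw [hQ, neg_add]; exact qe_add _ _
  have hB : ∀ (x y : A₁ × A₂),
      qe (-(Q (x + y) - Q x - Q y)) =
        qe (-(Q₁ (x.1 + y.1) - Q₁ x.1 - Q₁ y.1)) * qe (-(Q₂ (x.2 + y.2) - Q₂ x.2 - Q₂ y.2)) := by
    intro x y
    have : -(Q (x + y) - Q x - Q y) =
        (-(Q₁ (x.1 + y.1) - Q₁ x.1 - Q₁ y.1)) + (-(Q₂ (x.2 + y.2) - Q₂ x.2 - Q₂ y.2)) := by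
      rw [hQ, hQ, hQ]
      show -((Q₁ (x.1 + y.1) + Q₂ (x.2 + y.2)) - _ - _) = _
      abel
    rw [this, qe_add]
  have hc : ((Fintype.card (A₁ × A₂) : ℂ)⁻¹ * ∑ z : A₁ × A₂, qe (-(Q z))) =
      ((Fintype.card A₁ : ℂ)⁻¹ * ∑ z, qe (-(Q₁ z))) *
        ((Fintype.card A₂ : ℂ)⁻¹ * ∑ z, qe (-(Q₂ z))) := by
    have hs : (∑ z : A₁ × A₂, qe (-(Q z))) =
        (∑ z, qe (-(Q₁ z))) * (∑ z, qe (-(Q₂ z))) := by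
      rw [Finset.sum_mul_sum, Fintype.sum_prod_type]
      exact Finset.sum_congr rfl fun z₁ _ => Finset.sum_congr rfl fun z₂ _ => hqeNQ (z₁, z₂)
    rw [hs, Fintype.card_prod]
    push_cast
    rw [mul_inv]
    ring
  constructor
  · apply basis_ext
    intro x₁ x₂
    simp only [LinearMap.comp_apply]
    rw [weilT_indic, map_smul, hΦ, TensorProduct.map_tmul, weilT_indic, weilT_indic,
      smul_tmul', tmul_smul, hqeQ]
    simp only [← TensorProduct.smul_tmul', smul_smul]
    rw [mul_comm]
  · apply basis_ext
    intro x₁ x₂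
    simp only [LinearMap.comp_apply]
    rw [weilS_indic, hΦ, TensorProduct.map_tmul, weilS_indic Q₁, weilS_indic Q₂]
    -- expand both sides into sums of elementary tensors
    rw [expand_indic (fun y => ((Fintype.card (A₁ × A₂) : ℂ)⁻¹ * ∑ z : A₁ × A₂, qe (-(Q z))) *
        qe (-(Q ((x₁, x₂) + y) - Q (x₁, x₂) - Q y))), map_sum]
    rw [expand_indic (fun y => ((Fintype.card A₁ : ℂ)⁻¹ * ∑ z, qe (-(Q₁ z))) *
        qe (-(Q₁ (x₁ + y) - Q₁ x₁ - Q₁ y)))]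
    rw [expand_indic (fun y => ((Fintype.card A₂ : ℂ)⁻¹ * ∑ z, qe (-(Q₂ z))) *
        qe (-(Q₂ (x₂ + y) - Q₂ x₂ - Q₂ y)))]
    rw [TensorProduct.sum_tmul]
    simp only [map_smul, TensorProduct.tmul_sum, TensorProduct.smul_tmul', tmul_smul, smul_smul]
    rw [Fintype.sum_prod_type]
    refine Finset.sum_congr rfl fun y₁ _ => Finset.sum_congr rfl fun y₂ _ => ?_
    rw [← Prod.mk.eta (p := (y₁, y₂)), hΦ, ← TensorProduct.smul_tmul']
    congr 1
    rw [hB (x₁, x₂) (y₁, y₂), hc]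
    ring
end

section
/- Let (A,Q) be a finite quadratic module with even signature, and set ε = (∑_{z∈A} e(−Q(z)))²/|A|, so ε ∈ {1, −1}. Then every v ∈ ℂ[A] with Sv = v satisfies v(−a) = ε·v(a) for all a ∈ A. In particular, every invariant lies in the ε-eigenspace ℂ[A]^ε of the involution v ↦ v(−·), and the (−ε)-eigenspace contains no nonzero invariants of the Weil representation. -/
open Finset

lemma qe_ne_zero (a : AddCircle (1 : ℚ)) : qe a ≠ 0 := Complex.exp_ne_zero _

lemma qe_zero : qe 0 = 1 := by
  have h := qe_add 0 0
  rw [add_zero] at h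
  have h2 : qe 0 * qe 0 = qe 0 * 1 := by rw [mul_one, ← h]
  exact (mul_left_cancel₀ (qe_ne_zero 0) h2)

lemma qe_eq_one {q : AddCircle (1 : ℚ)} (h : qe q = 1) : q = 0 := by
  unfold qe at h
  rw [Complex.exp_eq_one_iff] at h
  obtain ⟨n, hn⟩ := h
  have hπ : (2 * (Real.pi : ℂ) * Complex.I) ≠ 0 := by
    exact mul_ne_zero (mul_ne_zero two_ne_zero
      (Complex.ofReal_ne_zero.mpr Real.pi_ne_zero)) Complex.I_ne_zero
  have hq : ((q.out : ℚ) : ℂ) = (n : ℂ) := by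
    have h2 : (2 * (Real.pi : ℂ) * Complex.I) * ((q.out : ℚ) : ℂ)
        = (2 * (Real.pi : ℂ) * Complex.I) * (n : ℂ) := by linear_combination hn
    exact mul_left_cancel₀ hπ h2
  have hq' : (q.out : ℚ) = (n : ℚ) := by exact_mod_cast hq
  have : q = ((q.out : ℚ) : AddCircle (1 : ℚ)) := (QuotientAddGroup.out_eq' q).symm
  rw [this, hq']
  rw [AddCircle.coe_eq_zero_iff]
  exact ⟨n, by simp⟩

section helpers

variable {A : Type*} [AddCommGroup A] [Fintype A] {Q : A → AddCircle (1 : ℚ)}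

lemma fqm_Q_zero (hQ : IsFQM Q) : Q 0 = 0 := by
  have h := hQ.1 0 0
  simpa using h

lemma B_add_right (hQ : IsFQM Q) (x y y' : A) :
    Q (x + (y + y')) - Q x - Q (y + y')
      = (Q (x + y) - Q x - Q y) + (Q (x + y') - Q x - Q y') := by
  calc Q (x + (y + y')) - Q x - Q (y + y')
      = Q (y + y' + x) - Q (y + y') - Q x := by rw [add_comm x]; abel
    _ = (Q (y + x) - Q y - Q x) + (Q (y' + x) - Q y' - Q x) := hQ.2.1 y y' x
    _ = (Q (x + y) - Q x - Q y) + (Q (x + y') - Q x - Q y') := by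
        rw [add_comm y x, add_comm y' x]; abel

open Classical in
lemma charsum (hQ : IsFQM Q) (c : A) :
    ∑ x : A, qe (-(Q (x + c) - Q x - Q c))
      = if c = 0 then (Fintype.card A : ℂ) else 0 := by
  classical
  by_cases hc : c = 0
  · subst hc
    have h0 : ∀ x : A, qe (-(Q (x + 0) - Q x - Q 0)) = 1 := by
      intro x
      have : -(Q (x + 0) - Q x - Q 0) = 0 := by
        rw [add_zero, fqm_Q_zero hQ]; abel
      rw [this, qe_zero]
    rw [if_pos rfl, Finset.sum_congr rfl fun x _ => h0 x]
    simp [Finset.card_univ]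
  · rw [if_neg hc]
    have hne : ∃ y, Q (c + y) - Q c - Q y ≠ 0 := by
      by_contra h; push_neg at h; exact hc (hQ.2.2 c h)
    obtain ⟨y, hy⟩ := hne
    have hy' : Q (y + c) - Q y - Q c ≠ 0 := by
      rw [add_comm y c]; intro h; apply hy; rw [← h]; abel
    set f : A → ℂ := (fun x => qe (-(Q (x + c) - Q x - Q c))) with hf
    have hmul : f y * ∑ x, f x = ∑ x, f x := by
      rw [Finset.mul_sum]
      rw [← Equiv.sum_comp (Equiv.addLeft y) f]
      refine Finset.sum_congr rfl fun x _ => ?_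
      simp only [hf, Equiv.coe_addLeft]
      rw [← qe_add]
      congr 1
      rw [← neg_add]
      congr 1
      exact (hQ.2.1 y x c).symm
    have hq1 : f y ≠ 1 := by
      intro h
      apply hy'
      have h0 := qe_eq_one (q := -(Q (y + c) - Q y - Q c)) h
      rwa [neg_eq_zero] at h0
    have hz : (f y - 1) * ∑ x, f x = 0 := by
      rw [sub_mul, one_mul, hmul, sub_self]
    rcases mul_eq_zero.mp hz with h | h
    · exact absurd (sub_eq_zero.mp h) hq1
    · exact h

end helpers

lemma weilS_sq {A : Type*} [AddCommGroup A] [Fintype A]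
    {Q : A → AddCircle (1 : ℚ)} (hQ : IsFQM Q) (v : A → ℂ) (y : A) :
    weilS Q (weilS Q v) y
      = ((∑ z, qe (-(Q z))) ^ 2 / (Fintype.card A : ℂ)) * v (-y) := by
  classical
  have hN : (Fintype.card A : ℂ) ≠ 0 := Nat.cast_ne_zero.mpr Fintype.card_ne_zero
  set G : ℂ := ∑ z, qe (-(Q z)) with hG
  set γ : ℂ := (Fintype.card A : ℂ)⁻¹ * G with hγ
  have hS : ∀ (w : A → ℂ) (x : A),
      weilS Q w x = γ * ∑ u, qe (-(Q (u + x) - Q u - Q x)) * w u := fun w x => rfl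
  have key : ∀ x u : A, qe (-(Q (x + y) - Q x - Q y)) * qe (-(Q (u + x) - Q u - Q x))
      = qe (-(Q (x + (y + u)) - Q x - Q (y + u))) := by
    intro x u
    rw [← qe_add]
    congr 1
    have hsymm : Q (u + x) - Q u - Q x = Q (x + u) - Q x - Q u := by
      rw [add_comm u x]; abel
    rw [hsymm, ← neg_add]
    congr 1
    exact (B_add_right hQ x y u).symm
  rw [hS, Finset.sum_congr rfl fun x _ => by rw [hS (w := v) (x := x)]]
  calc γ * ∑ x, qe (-(Q (x + y) - Q x - Q y)) *
        (γ * ∑ u, qe (-(Q (u + x) - Q u - Q x)) * v u)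
      = γ * γ * ∑ u, (∑ x, qe (-(Q (x + (y + u)) - Q x - Q (y + u)))) * v u := by
        simp only [Finset.mul_sum, Finset.sum_mul]
        rw [Finset.sum_comm]
        refine Finset.sum_congr rfl fun x _ => ?_
        refine Finset.sum_congr rfl fun u _ => ?_
        linear_combination γ * γ * v x * key u x
    _ = γ * γ * ∑ u, (if y + u = 0 then (Fintype.card A : ℂ) else 0) * v u := by
        simp only [charsum hQ]
    _ = γ * γ * ((Fintype.card A : ℂ) * v (-y)) := by
        congr 1
        have hite : ∀ u : A, (if y + u = 0 then (Fintype.card A : ℂ) else 0) * v u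
            = if u = -y then (Fintype.card A : ℂ) * v u else 0 := by
          intro u
          by_cases h : u = -y
          · subst h; simp
          · rw [if_neg h, if_neg, zero_mul]
            intro hc; exact h (eq_neg_of_add_eq_zero_right hc)
        simp only [hite]
        rw [Finset.sum_ite_eq' Finset.univ (-y)]
        simp
    _ = G ^ 2 / (Fintype.card A : ℂ) * v (-y) := by
        rw [hγ]; field_simp

/-- In the even signature case, with `ε = (∑ e(-Q(z)))²/|A| ∈ {1,-1}`, every vector
fixed by `S` satisfies `v(-a) = ε·v(a)`; in particular all invariants lie in `ℂ[A]^ε`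
and the `(-ε)`-eigenspace of `v ↦ v(-·)` contains no nonzero invariants. -/
theorem stmt7 {A : Type*} [AddCommGroup A] [Fintype A]
    (Q : A → AddCircle (1 : ℚ)) (hQ : IsFQM Q)
    (heven : (∑ z, qe (-(Q z))) ^ 4 = (Fintype.card A : ℂ) ^ 2)
    (ε : ℂ) (hε : ε = (∑ z, qe (-(Q z))) ^ 2 / (Fintype.card A : ℂ)) :
    (ε = 1 ∨ ε = -1) ∧
    (∀ v : A → ℂ, weilS Q v = v → ∀ a : A, v (-a) = ε * v a) ∧
    (∀ v ∈ weilInv Q, (∀ a : A, v (-a) = -ε * v a) → v = 0) := by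
  have hN : (Fintype.card A : ℂ) ≠ 0 := Nat.cast_ne_zero.mpr Fintype.card_ne_zero
  have hsq : ε ^ 2 = 1 := by
    rw [hε, div_pow, ← pow_mul]
    rw [div_eq_one_iff_eq (pow_ne_zero 2 hN)]
    exact heven
  have hpm : ε = 1 ∨ ε = -1 := by
    have hz : (ε - 1) * (ε + 1) = 0 := by linear_combination hsq
    rcases mul_eq_zero.mp hz with h | h
    · exact Or.inl (sub_eq_zero.mp h)
    · exact Or.inr (eq_neg_of_add_eq_zero_left h)
  have part2 : ∀ v : A → ℂ, weilS Q v = v → ∀ a : A, v (-a) = ε * v a := by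
    intro v hv a
    calc v (-a) = weilS Q (weilS Q v) (-a) := by rw [hv, hv]
      _ = ((∑ z, qe (-(Q z))) ^ 2 / (Fintype.card A : ℂ)) * v (- -a) := weilS_sq hQ v (-a)
      _ = ε * v a := by rw [neg_neg, ← hε]
  refine ⟨hpm, part2, ?_⟩
  intro v hv h
  obtain ⟨hvS, _⟩ := hv
  have hεne : ε ≠ 0 := by
    rcases hpm with h1 | h1 <;> rw [h1] <;> norm_num
  funext a
  have h2 := part2 v hvS a
  have h3 : (2 * ε) * v a = 0 := by linear_combination h a - h2
  have h4 : (2 * ε : ℂ) ≠ 0 := mul_ne_zero two_ne_zero hεne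
  simpa using (mul_eq_zero.mp h3).resolve_left h4
end

section
/- Let (A,Q) be a finite quadratic module which does not have even signature, i.e. (∑_{z∈A} e(−Q(z)))⁴ ≠ |A|². Then Inv(A,Q) = {0}; in fact, the only v ∈ ℂ[A] with Sv = v is v = 0. (The space of invariants of the Weil representation vanishes unless the signature of (A,Q) is even.) -/
open Finset

namespace Stmt9Aux

lemma exp_int (k : ℤ) : Complex.exp (2 * (Real.pi : ℂ) * Complex.I * k) = 1 := by
  rw [show (2 * (Real.pi:ℂ) * Complex.I * k : ℂ) = k * (2 * Real.pi * Complex.I) by ring,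
    Complex.exp_int_mul_two_pi_mul_I]

lemma out_add (a b : AddCircle (1:ℚ)) : ∃ k : ℤ, ((a + b).out : ℚ) = a.out + b.out + k := by
  have h : (((a+b).out - (a.out + b.out) : ℚ) : AddCircle (1:ℚ)) = 0 := by
    rw [QuotientAddGroup.mk_sub, QuotientAddGroup.mk_add, QuotientAddGroup.out_eq',
      QuotientAddGroup.out_eq', QuotientAddGroup.out_eq', sub_self]
  rw [AddCircle.coe_eq_zero_iff] at h
  obtain ⟨k, hk⟩ := h
  exact ⟨k, by simp at hk; linarith⟩

lemma qe_add (a b : AddCircle (1:ℚ)) : qe (a + b) = qe a * qe b := by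
  obtain ⟨k, hk⟩ := out_add a b
  unfold qe
  rw [← Complex.exp_add, hk]
  push_cast
  rw [show 2 * (Real.pi:ℂ) * Complex.I * ((a.out:ℂ) + b.out + k)
      = (2 * Real.pi * Complex.I * a.out + 2 * Real.pi * Complex.I * b.out)
        + 2 * Real.pi * Complex.I * k by ring, Complex.exp_add, exp_int, mul_one]

lemma qe_zero : qe (0 : AddCircle (1:ℚ)) = 1 := by
  have h : (((0 : AddCircle (1:ℚ)).out : ℚ) : AddCircle (1:ℚ)) = 0 := QuotientAddGroup.out_eq' _
  rw [AddCircle.coe_eq_zero_iff] at h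
  obtain ⟨k, hk⟩ := h
  unfold qe
  rw [show (((0 : AddCircle (1:ℚ)).out : ℚ) : ℂ) = (k:ℂ) by
    rw [← hk]; push_cast [zsmul_eq_mul]; ring, exp_int]

lemma qe_ne_zero (a : AddCircle (1:ℚ)) : qe a ≠ 0 := Complex.exp_ne_zero _

lemma qe_neg (a : AddCircle (1:ℚ)) : qe (-a) = (qe a)⁻¹ := by
  have h := qe_add (-a) a
  rw [neg_add_cancel, qe_zero] at h
  exact eq_inv_of_mul_eq_one_left h.symm

lemma qe_eq_one_iff (a : AddCircle (1:ℚ)) : qe a = 1 ↔ a = 0 := by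
  constructor
  · intro h
    unfold qe at h
    rw [Complex.exp_eq_one_iff] at h
    obtain ⟨n, hn⟩ := h
    have h2 : (2 * (Real.pi:ℂ) * Complex.I) ≠ 0 :=
      mul_ne_zero (mul_ne_zero two_ne_zero (Complex.ofReal_ne_zero.mpr Real.pi_ne_zero))
        Complex.I_ne_zero
    have : ((a.out : ℚ) : ℂ) = (n : ℂ) := by
      exact mul_left_cancel₀ h2 (by linear_combination hn)
    have hq : (a.out : ℚ) = (n : ℚ) := by exact_mod_cast this
    calc a = ((a.out : ℚ) : AddCircle (1:ℚ)) := (QuotientAddGroup.out_eq' a).symm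
      _ = 0 := by
        rw [hq, AddCircle.coe_eq_zero_iff]
        exact ⟨n, by simp⟩
  · rintro rfl; exact qe_zero

end Stmt9Aux

namespace Stmt9Aux

lemma char_sum_zero {A : Type*} [AddCommGroup A] [Fintype A] (Q : A → AddCircle (1:ℚ))
    (hQ : IsFQM Q) :
    ∑ y, qe (-(Q ((0:A) + y) - Q 0 - Q y)) = (Fintype.card A : ℂ) := by
  have hQ0 : Q (0:A) = 0 := by simpa using hQ.1 0 0
  have h1 : ∀ y : A, qe (-(Q ((0:A) + y) - Q 0 - Q y)) = 1 := by
    intro y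
    rw [zero_add, hQ0, sub_zero, sub_self, neg_zero, qe_zero]
  simp [h1, hQ0, qe_zero, Finset.card_univ]

lemma char_sum_ne {A : Type*} [AddCommGroup A] [Fintype A] (Q : A → AddCircle (1:ℚ))
    (hQ : IsFQM Q) (c : A) (hc : c ≠ 0) :
    ∑ y, qe (-(Q (c + y) - Q c - Q y)) = 0 := by
  have hex : ∃ y₀ : A, Q (c + y₀) - Q c - Q y₀ ≠ 0 := by
    by_contra hno
    push_neg at hno
    exact hc (hQ.2.2 c hno)
  obtain ⟨y₀, hy₀⟩ := hex
  have hne1 : qe (-(Q (c + y₀) - Q c - Q y₀)) ≠ 1 := by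
    rw [Ne, qe_eq_one_iff, neg_eq_zero]; exact hy₀
  have hadd : ∀ y : A, Q (c + (y + y₀)) - Q c - Q (y + y₀)
      = (Q (c + y) - Q c - Q y) + (Q (c + y₀) - Q c - Q y₀) := by
    intro y
    have h1 := hQ.2.1 y y₀ c
    calc Q (c + (y + y₀)) - Q c - Q (y + y₀)
        = Q (y + y₀ + c) - Q (y + y₀) - Q c := by rw [add_comm c (y + y₀)]; abel
      _ = (Q (y + c) - Q y - Q c) + (Q (y₀ + c) - Q y₀ - Q c) := h1
      _ = (Q (c + y) - Q c - Q y) + (Q (c + y₀) - Q c - Q y₀) := by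
          rw [add_comm y c, add_comm y₀ c]; abel
  have hshift : ∑ y, qe (-(Q (c + y) - Q c - Q y))
      = (∑ y, qe (-(Q (c + y) - Q c - Q y))) * qe (-(Q (c + y₀) - Q c - Q y₀)) := by
    calc ∑ y, qe (-(Q (c + y) - Q c - Q y))
        = ∑ y, qe (-(Q (c + (y + y₀)) - Q c - Q (y + y₀))) :=
          (Fintype.sum_equiv (Equiv.addRight y₀) _ _ (fun y => rfl)).symm
      _ = ∑ y, qe (-(Q (c + y) - Q c - Q y)) * qe (-(Q (c + y₀) - Q c - Q y₀)) := by
          refine Finset.sum_congr rfl fun y _ => ?_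
          rw [hadd y, neg_add, qe_add]
      _ = _ := (Finset.sum_mul _ _ _).symm
  have hz : (∑ y, qe (-(Q (c + y) - Q c - Q y)))
      * (qe (-(Q (c + y₀) - Q c - Q y₀)) - 1) = 0 := by
    rw [mul_sub, ← hshift, mul_one, sub_self]
  rcases mul_eq_zero.mp hz with h | h
  · exact h
  · exact absurd (by linear_combination h) hne1

end Stmt9Aux

/-- If the signature of `(A,Q)` is not even, then the only vector fixed by `S` is `0`;
in particular the space of invariants of the Weil representation vanishes. -/
theorem stmt9 {A : Type*} [AddCommGroup A] [Fintype A]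
    (Q : A → AddCircle (1 : ℚ)) (hQ : IsFQM Q)
    (hodd : (∑ z, qe (-(Q z))) ^ 4 ≠ (Fintype.card A : ℂ) ^ 2) :
    (∀ v : A → ℂ, weilS Q v = v → v = 0) ∧ weilInv Q = ⊥ := by
  classical
  have hfirst : ∀ v : A → ℂ, weilS Q v = v → v = 0 := by
    intro v hv
    obtain ⟨g, hg⟩ : ∃ g : ℂ, g = ∑ z, qe (-(Q z)) := ⟨_, rfl⟩
    obtain ⟨n, hnn⟩ : ∃ n : ℂ, n = (Fintype.card A : ℂ) := ⟨_, rfl⟩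
    have hn : n ≠ 0 := by
      rw [hnn]; exact Nat.cast_ne_zero.mpr Fintype.card_ne_zero
    rw [← hg, ← hnn] at hodd
    have hv' : ∀ y, v y = (n⁻¹ * g) * ∑ x, qe (-(Q (x + y) - Q x - Q y)) * v x := by
      intro y
      rw [hg, hnn]
      exact (congrFun hv y).symm
    have step1 : ∀ w, ∑ y, qe (-(Q (y + w) - Q y - Q w)) * v y = g * v (-w) := by
      intro w
      have hmerge : ∀ x y : A, Q ((x + w) + y) - Q (x + w) - Q y
          = (Q (y + w) - Q y - Q w) + (Q (x + y) - Q x - Q y) := by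
        intro x y
        rw [hQ.2.1 x w y, add_comm w y]
        abel
      calc ∑ y, qe (-(Q (y + w) - Q y - Q w)) * v y
          = ∑ y, ∑ x, (n⁻¹ * g) *
              (qe (-(Q (y + w) - Q y - Q w)) * qe (-(Q (x + y) - Q x - Q y)) * v x) := by
            refine Finset.sum_congr rfl fun y _ => ?_
            rw [hv' y, Finset.mul_sum, Finset.mul_sum]
            exact Finset.sum_congr rfl fun x _ => by ring
        _ = ∑ x, ∑ y, (n⁻¹ * g) *
              (qe (-(Q (y + w) - Q y - Q w)) * qe (-(Q (x + y) - Q x - Q y)) * v x) :=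
            Finset.sum_comm
        _ = ∑ x, ((n⁻¹ * g) * ∑ y, qe (-(Q ((x + w) + y) - Q (x + w) - Q y))) * v x := by
            refine Finset.sum_congr rfl fun x _ => ?_
            rw [Finset.mul_sum, Finset.sum_mul]
            refine Finset.sum_congr rfl fun y _ => ?_
            rw [hmerge x y, neg_add, Stmt9Aux.qe_add]
            ring
        _ = ∑ x, ((n⁻¹ * g) * if x + w = 0 then n else 0) * v x := by
            refine Finset.sum_congr rfl fun x _ => ?_
            by_cases h : x + w = 0
            · rw [if_pos h, h, Stmt9Aux.char_sum_zero Q hQ, hnn]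
            · rw [if_neg h, Stmt9Aux.char_sum_ne Q hQ _ h]
        _ = g * v (-w) := by
            rw [Finset.sum_eq_single (-w)]
            · rw [if_pos (neg_add_cancel w)]
              field_simp
            · intro x _ hx
              rw [if_neg (fun h => hx (eq_neg_of_add_eq_zero_left h))]
              ring
            · intro h
              exact absurd (Finset.mem_univ _) h
    have hvv : ∀ w, v w = n⁻¹ * g * (g * v (-w)) := by
      intro w
      rw [hv' w, step1 w]
    funext w
    have h1 : v w = n⁻¹ * g * (g * (n⁻¹ * g * (g * v w))) := by
      conv_lhs => rw [hvv w, hvv (-w), neg_neg]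
    have h2 : (n ^ 2 - g ^ 4) * v w = 0 := by
      field_simp at h1
      linear_combination h1
    rcases mul_eq_zero.mp h2 with h | h
    · exact absurd (sub_eq_zero.mp h).symm hodd
    · exact h
  refine ⟨hfirst, le_antisymm ?_ bot_le⟩
  rintro v ⟨h1, _⟩
  exact (Submodule.mem_bot ℂ).mpr (hfirst v h1)
end

section
/- Let (A,Q) be a finite quadratic module of level N. Then for every prime p, p divides N if and only if p divides |A|. -/
open Finset

/-- A prime divides the level of a finite quadratic module if and only if it divides
the order of the underlying group. -/
theorem stmt14 {A : Type*} [AddCommGroup A] [Fintype A]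
    (Q : A → AddCircle (1 : ℚ)) (hQ : IsFQM Q)
    (N : ℕ) (hN : IsLvl Q N) (p : ℕ) (hp : p.Prime) :
    p ∣ N ↔ p ∣ Fintype.card A := by
  obtain ⟨hB, hbil, hnd⟩ := hQ
  obtain ⟨hNpos, hker, hmin⟩ := hN
  have hQ0 : Q 0 = 0 := by
    have := hB 0 0
    simpa using this
  -- bilinearity with natural multiples
  have hBn : ∀ (n : ℕ) (x y : A),
      Q (n • x + y) - Q (n • x) - Q y = n • (Q (x + y) - Q x - Q y) := by
    intro n x y
    induction n with
    | zero => simp [hQ0]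
    | succ n ih =>
      have h := hbil (n • x) x y
      rw [succ_nsmul, h, ih, succ_nsmul]
  -- N kills every element of A
  have hNx : ∀ x : A, N • x = 0 := by
    intro x
    apply hnd
    intro y
    rw [hBn N x y, smul_sub, smul_sub, hker, hker, hker]
    simp
  constructor
  · -- p ∣ N → p ∣ card A
    intro hpN
    -- card² kills Q
    have hcard : ∀ x : A, (Fintype.card A) ^ 2 • Q x = 0 := by
      intro x
      have h1 : Q ((addOrderOf x : ℤ) • x) = (addOrderOf x : ℤ) ^ 2 • Q x := hB _ x
      rw [natCast_zsmul, addOrderOf_nsmul_eq_zero, hQ0] at h1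
      have h2 : ((addOrderOf x) ^ 2 : ℕ) • Q x = 0 := by
        have := h1.symm
        rwa [show ((addOrderOf x : ℤ)) ^ 2 = ((addOrderOf x ^ 2 : ℕ) : ℤ) by push_cast; ring,
          natCast_zsmul] at this
      obtain ⟨k, hk⟩ : (addOrderOf x) ^ 2 ∣ (Fintype.card A) ^ 2 :=
        pow_dvd_pow_of_dvd (addOrderOf_dvd_card) 2
      rw [hk, mul_nsmul, h2, smul_zero]
    -- gcd argument: N ∣ card²
    set M := (Fintype.card A) ^ 2 with hM
    have hMpos : 0 < M := pow_pos Fintype.card_pos 2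
    have hdker : ∀ x : A, (Nat.gcd N M) • Q x = 0 := by
      intro x
      have hbez : ((Nat.gcd N M : ℤ)) = N * Nat.gcdA N M + M * Nat.gcdB N M :=
        Nat.gcd_eq_gcd_ab N M
      have : ((Nat.gcd N M : ℤ)) • Q x = 0 := by
        rw [hbez, add_smul, mul_smul, mul_smul, natCast_zsmul, natCast_zsmul,
          smul_comm N, smul_comm M, hker, hcard, smul_zero, smul_zero, add_zero]
      rwa [natCast_zsmul] at this
    have hdpos : 0 < Nat.gcd N M := Nat.gcd_pos_of_pos_left M hNpos
    have hle : N ≤ Nat.gcd N M := hmin _ hdpos hdker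
    have hge : Nat.gcd N M ≤ N := Nat.le_of_dvd hNpos (Nat.gcd_dvd_left N M)
    have hNdvd : N ∣ M := by
      have : Nat.gcd N M = N := le_antisymm hge hle
      rw [← this]; exact Nat.gcd_dvd_right N M
    exact hp.dvd_of_dvd_pow (hpN.trans hNdvd)
  · -- p ∣ card A → p ∣ N
    intro hpc
    haveI : Fact p.Prime := ⟨hp⟩
    obtain ⟨x, hx⟩ := exists_prime_addOrderOf_dvd_card p hpc
    have : addOrderOf x ∣ N := addOrderOf_dvd_of_nsmul_eq_zero (hNx x)
    rwa [hx] at this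
end
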